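/- If M: γ → SU(2) is analytic in λ on an open segment γ of the circle with eigenvalue ρ₁, and λ₀ ∈ γ, then M(λ₀) = ±I and M'(λ₀) = 0 if and only if ρ₁(λ₀) = ±1 and ρ₁'(λ₀) = 0. -/

import Mathlib

open Matrix Filter

/-- The entrywise derivative of a matrix-valued function of a real parameter. -/
noncomputable def matDeriv (M : ℝ → Matrix (Fin 2) (Fin 2) ℂ) (t : ℝ) :
    Matrix (Fin 2) (Fin 2) ℂ :=
  Matrix.of fun i j => deriv (fun s => M s i j) t

section helpers
variable {F G : Type*} [NormedAddCommGroup F] [NormedSpace ℝ F] [CompleteSpace F]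
  [NormedAddCommGroup G] [NormedSpace ℝ G] [CompleteSpace G]

lemma analyticAt_deriv' {f : ℝ → F} {x : ℝ} (h : AnalyticAt ℝ f x) :
    AnalyticAt ℝ (deriv f) x := by
  obtain ⟨s, hs, hf⟩ := h.exists_mem_nhds_analyticOnNhd
  exact hf.deriv x (mem_of_mem_nhds hs)

omit [CompleteSpace F] [CompleteSpace G] in
lemma clm_analyticAt (L : F →L[ℝ] G) {f : ℝ → F} {x : ℝ} (hf : AnalyticAt ℝ f x) :
    AnalyticAt ℝ (fun t => L (f t)) x :=
  (L.analyticAt (f x)).comp hf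

omit [CompleteSpace F] [CompleteSpace G] in
lemma deriv_clm_comp' (L : F →L[ℝ] G) {f : ℝ → F} {x : ℝ} (hf : DifferentiableAt ℝ f x) :
    deriv (fun t => L (f t)) x = L (deriv f x) :=
  (L.hasFDerivAt.comp_hasDerivAt x hf.hasDerivAt).deriv

omit [CompleteSpace G] in
lemma sd_clm (L : F →L[ℝ] G) {f : ℝ → F} {x : ℝ} (hf : AnalyticAt ℝ f x) :
    deriv (deriv (fun t => L (f t))) x = L (deriv (deriv f) x) := by
  have h1 : deriv (fun t => L (f t)) =ᶠ[nhds x] fun t => L (deriv f t) := by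
    filter_upwards [hf.eventually_analyticAt] with t ht
    exact deriv_clm_comp' L ht.differentiableAt
  rw [h1.deriv_eq]
  exact deriv_clm_comp' L (analyticAt_deriv' hf).differentiableAt

variable {A : Type*} [NormedCommRing A] [NormedAlgebra ℝ A] [CompleteSpace A]

lemma sd_add {f g : ℝ → A} {x : ℝ} (hf : AnalyticAt ℝ f x) (hg : AnalyticAt ℝ g x) :
    deriv (deriv (fun t => f t + g t)) x = deriv (deriv f) x + deriv (deriv g) x := by
  have h1 : deriv (fun t => f t + g t) =ᶠ[nhds x] fun t => deriv f t + deriv g t := by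
    filter_upwards [hf.eventually_analyticAt, hg.eventually_analyticAt] with t h1 h2
    exact deriv_add h1.differentiableAt h2.differentiableAt
  rw [h1.deriv_eq]
  exact deriv_add (analyticAt_deriv' hf).differentiableAt (analyticAt_deriv' hg).differentiableAt

lemma sd_sq {f : ℝ → A} {x : ℝ} (hf : AnalyticAt ℝ f x) (h0 : f x = 0) :
    deriv (deriv (fun t => f t ^ 2)) x = 2 * (deriv f x) ^ 2 := by
  have h1 : deriv (fun t => f t ^ 2) =ᶠ[nhds x] fun t => 2 * f t * deriv f t := by
    filter_upwards [hf.eventually_analyticAt] with t ht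
    have h := (ht.differentiableAt.hasDerivAt.mul ht.differentiableAt.hasDerivAt).deriv
    have hsq : (fun t => f t ^ 2) = fun t => f t * f t := by funext s; ring
    rw [hsq]; exact h.trans (by ring)
  rw [h1.deriv_eq]
  have h2 : HasDerivAt (fun t => 2 * f t * deriv f t)
      ((2 * deriv f x) * deriv f x + (2 * f x) * deriv (deriv f) x) x :=
    (hf.differentiableAt.hasDerivAt.const_mul 2).mul
      (analyticAt_deriv' hf).differentiableAt.hasDerivAt
  rw [h2.deriv, h0]
  ring

end helpers

lemma pt_rev (aC bC ρ : ℂ) (εr : ℝ) (hε : εr = 1 ∨ εr = -1)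
    (hn : Complex.normSq aC + Complex.normSq bC = 1)
    (hch : ρ ^ 2 - 2 * (aC.re : ℂ) * ρ + 1 = 0) (hρ : ρ = (εr : ℂ)) :
    aC = (εr : ℂ) ∧ bC = 0 := by
  subst hρ
  have hε2 : εr ^ 2 = 1 := by rcases hε with h | h <;> simp [h]
  have hre : ((εr ^ 2 - 2 * aC.re * εr + 1 : ℝ) : ℂ) = 0 := by
    push_cast
    linear_combination hch
  rw [Complex.ofReal_eq_zero] at hre
  have hre2 : aC.re = εr := by
    rcases hε with h | h <;> subst h <;> nlinarith
  have him : aC.im ^ 2 + Complex.normSq bC = 0 := by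
    have := Complex.normSq_apply aC
    nlinarith [this]
  have hb : bC = 0 := by
    have h1 : Complex.normSq bC = 0 := by nlinarith [Complex.normSq_nonneg bC, sq_nonneg aC.im]
    exact Complex.normSq_eq_zero.mp h1
  have ha : aC = (εr : ℂ) := by
    apply Complex.ext <;> simp [hre2]
    nlinarith [Complex.normSq_nonneg bC, sq_nonneg aC.im]
  exact ⟨ha, hb⟩

lemma scalar_core (γ : Set ℝ) (hγ : IsOpen γ) (a b ρ₁ : ℝ → ℂ) (l₀ : ℝ) (hl₀ : l₀ ∈ γ)
    (haA : ∀ t ∈ γ, AnalyticAt ℝ a t) (hbA : ∀ t ∈ γ, AnalyticAt ℝ b t)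
    (hρA : ∀ t ∈ γ, AnalyticAt ℝ ρ₁ t)
    (hnorm : ∀ t ∈ γ, Complex.normSq (a t) + Complex.normSq (b t) = 1)
    (hchar : ∀ t ∈ γ, ρ₁ t ^ 2 - 2 * ((a t).re : ℂ) * ρ₁ t + 1 = 0)
    (εr : ℝ) (hε : εr = 1 ∨ εr = -1)
    (h0 : a l₀ = (εr : ℂ)) (hb0 : b l₀ = 0) :
    ρ₁ l₀ = (εr : ℂ) ∧
      ((deriv a l₀ = 0 ∧ deriv b l₀ = 0) ↔ deriv ρ₁ l₀ = 0) := by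
  have hnb : γ ∈ nhds l₀ := hγ.mem_nhds hl₀
  have hε2 : εr ^ 2 = 1 := by rcases hε with h | h <;> simp [h]
  have hε2C : (εr : ℂ) ^ 2 = 1 := by exact_mod_cast congrArg (Complex.ofReal) hε2
  have hu0 : (a l₀).re = εr := by rw [h0]; simp
  have hv0 : (a l₀).im = 0 := by rw [h0]; simp
  have hp0 : (b l₀).re = 0 := by rw [hb0]; simp
  have hq0 : (b l₀).im = 0 := by rw [hb0]; simp
  have hρ0 : ρ₁ l₀ = (εr : ℂ) := by
    have hch0 := hchar l₀ hl₀
    rw [hu0] at hch0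
    have hsq : (ρ₁ l₀ - (εr : ℂ)) ^ 2 = 0 := by linear_combination hch0 + hε2C
    exact sub_eq_zero.mp (sq_eq_zero_iff.mp hsq)
  have huA : ∀ t ∈ γ, AnalyticAt ℝ (fun s => (a s).re) t :=
    fun t ht => clm_analyticAt Complex.reCLM (haA t ht)
  have hvA : ∀ t ∈ γ, AnalyticAt ℝ (fun s => (a s).im) t :=
    fun t ht => clm_analyticAt Complex.imCLM (haA t ht)
  have hpA : ∀ t ∈ γ, AnalyticAt ℝ (fun s => (b s).re) t :=
    fun t ht => clm_analyticAt Complex.reCLM (hbA t ht)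
  have hqA : ∀ t ∈ γ, AnalyticAt ℝ (fun s => (b s).im) t :=
    fun t ht => clm_analyticAt Complex.imCLM (hbA t ht)
  have hsum : ∀ t ∈ γ, (a t).re ^ 2 + (a t).im ^ 2 + ((b t).re ^ 2 + (b t).im ^ 2) = 1 := by
    intro t ht
    have h := hnorm t ht
    rw [Complex.normSq_apply, Complex.normSq_apply] at h
    linear_combination h
  have hdu : deriv (fun s => (a s).re) l₀ = 0 := by
    have hmax : IsLocalMax (fun t => εr * (a t).re) l₀ := by
      filter_upwards [hnb] with t ht
      have h1 := hsum t ht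
      have h2 : εr * (a t).re ≤ 1 := by
        nlinarith [sq_nonneg ((a t).im), sq_nonneg ((b t).re), sq_nonneg ((b t).im),
          sq_nonneg (εr * (a t).re - 1), hε2]
      have h3 : εr * (a l₀).re = 1 := by rw [hu0]; nlinarith [hε2]
      simpa [h3] using h2
    have h1 := hmax.deriv_eq_zero
    have h2 : deriv (fun t => εr * (a t).re) l₀ = εr * deriv (fun s => (a s).re) l₀ :=
      deriv_const_mul εr (huA l₀ hl₀).differentiableAt
    rw [h2] at h1
    rcases hε with h | h <;> rw [h] at h1 <;> linarith
  have hGA : AnalyticAt ℝ (fun t => ρ₁ t - (((a t).re : ℝ) : ℂ)) l₀ :=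
    (hρA l₀ hl₀).sub (clm_analyticAt Complex.ofRealCLM (huA l₀ hl₀))
  have hG0 : ρ₁ l₀ - (((a l₀).re : ℝ) : ℂ) = 0 := by rw [hρ0, hu0]; ring
  have hGsq : (fun t => (ρ₁ t - (((a t).re : ℝ) : ℂ)) ^ 2) =ᶠ[nhds l₀]
      (fun t => (-Complex.ofRealCLM) ((a t).im ^ 2 + ((b t).re ^ 2 + (b t).im ^ 2))) := by
    filter_upwards [hnb] with t ht
    have h1 := hchar t ht
    have h2 := hsum t ht
    have h3 : (a t).re ^ 2 - 1 = -((a t).im ^ 2 + ((b t).re ^ 2 + (b t).im ^ 2)) := by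
      linarith
    have h4 : (ρ₁ t - (((a t).re : ℝ) : ℂ)) ^ 2 = (((a t).re : ℂ)) ^ 2 - 1 := by
      linear_combination h1
    rw [h4]
    simp only [ContinuousLinearMap.neg_apply, Complex.ofRealCLM_apply]
    rw [show ((((a t).re : ℝ) : ℂ)) ^ 2 - 1 = ((((a t).re ^ 2 - 1 : ℝ)) : ℂ) by push_cast; ring,
      h3]
    push_cast
    ring
  have hcast : HasDerivAt (fun t : ℝ => (((a t).re : ℝ) : ℂ))
      ((deriv (fun s => (a s).re) l₀ : ℝ) : ℂ) l₀ :=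
    Complex.ofRealCLM.hasFDerivAt.comp_hasDerivAt l₀ (huA l₀ hl₀).differentiableAt.hasDerivAt
  have hdG : deriv (fun t => ρ₁ t - (((a t).re : ℝ) : ℂ)) l₀ = deriv ρ₁ l₀ := by
    have h2 := ((hρA l₀ hl₀).differentiableAt.hasDerivAt.sub hcast).deriv
    rw [show (fun t => ρ₁ t - (((a t).re : ℝ) : ℂ)) = ρ₁ - fun t => (((a t).re : ℝ) : ℂ) from rfl,
      h2, hdu]
    simp
  have hv2A : AnalyticAt ℝ (fun t => (a t).im ^ 2) l₀ := (hvA l₀ hl₀).pow 2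
  have hp2A : AnalyticAt ℝ (fun t => (b t).re ^ 2) l₀ := (hpA l₀ hl₀).pow 2
  have hq2A : AnalyticAt ℝ (fun t => (b t).im ^ 2) l₀ := (hqA l₀ hl₀).pow 2
  have hpq2A : AnalyticAt ℝ (fun t => (b t).re ^ 2 + (b t).im ^ 2) l₀ := hp2A.add hq2A
  have hPA2 : AnalyticAt ℝ (fun t => (a t).im ^ 2 + ((b t).re ^ 2 + (b t).im ^ 2)) l₀ :=
    hv2A.add hpq2A
  have key : 2 * (deriv ρ₁ l₀) ^ 2 =
      (-Complex.ofRealCLM) (2 * (deriv (fun s => (a s).im) l₀) ^ 2 +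
        (2 * (deriv (fun s => (b s).re) l₀) ^ 2 + 2 * (deriv (fun s => (b s).im) l₀) ^ 2)) := by
    have e1 : deriv (deriv (fun t => (ρ₁ t - (((a t).re : ℝ) : ℂ)) ^ 2)) l₀
        = 2 * (deriv ρ₁ l₀) ^ 2 := by
      rw [sd_sq hGA hG0, hdG]
    have e2 := hGsq.deriv.deriv_eq
    have e3 : deriv (deriv (fun t =>
        (-Complex.ofRealCLM) ((a t).im ^ 2 + ((b t).re ^ 2 + (b t).im ^ 2)))) l₀
        = (-Complex.ofRealCLM)
          (deriv (deriv (fun t => (a t).im ^ 2 + ((b t).re ^ 2 + (b t).im ^ 2))) l₀) :=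
      sd_clm (-Complex.ofRealCLM) hPA2
    have e4 : deriv (deriv (fun t => (a t).im ^ 2 + ((b t).re ^ 2 + (b t).im ^ 2))) l₀
        = 2 * (deriv (fun s => (a s).im) l₀) ^ 2 +
          (2 * (deriv (fun s => (b s).re) l₀) ^ 2 + 2 * (deriv (fun s => (b s).im) l₀) ^ 2) := by
      rw [sd_add hv2A hpq2A, sd_add hp2A hq2A,
        sd_sq (hvA l₀ hl₀) hv0, sd_sq (hpA l₀ hl₀) hp0, sd_sq (hqA l₀ hl₀) hq0]
    rw [← e1, e2, e3, e4]
  refine ⟨hρ0, ?_, ?_⟩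
  · rintro ⟨hda, hdb⟩
    have hdv : deriv (fun s => (a s).im) l₀ = 0 := by
      have h : deriv (fun s => (a s).im) l₀ = Complex.imCLM (deriv a l₀) :=
        deriv_clm_comp' Complex.imCLM (haA l₀ hl₀).differentiableAt
      rw [h, hda]; simp
    have hdp : deriv (fun s => (b s).re) l₀ = 0 := by
      have h : deriv (fun s => (b s).re) l₀ = Complex.reCLM (deriv b l₀) :=
        deriv_clm_comp' Complex.reCLM (hbA l₀ hl₀).differentiableAt
      rw [h, hdb]; simp
    have hdq : deriv (fun s => (b s).im) l₀ = 0 := by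
      have h : deriv (fun s => (b s).im) l₀ = Complex.imCLM (deriv b l₀) :=
        deriv_clm_comp' Complex.imCLM (hbA l₀ hl₀).differentiableAt
      rw [h, hdb]; simp
    rw [hdv, hdp, hdq] at key
    have hsq0 : (deriv ρ₁ l₀) ^ 2 = 0 := by
      have h0' : ((-Complex.ofRealCLM) ((2:ℝ) * 0 ^ 2 + (2 * 0 ^ 2 + 2 * 0 ^ 2)) : ℂ) = 0 := by
        simp
      rw [h0'] at key
      linear_combination key / 2
    exact pow_eq_zero_iff (n := 2) (by norm_num) |>.mp hsq0
  · intro hdρ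
    rw [hdρ] at key
    simp only [ContinuousLinearMap.neg_apply, Complex.ofRealCLM_apply] at key
    have key2 : (2 * (deriv (fun s => (a s).im) l₀) ^ 2 +
        (2 * (deriv (fun s => (b s).re) l₀) ^ 2 + 2 * (deriv (fun s => (b s).im) l₀) ^ 2) : ℝ)
        = 0 := by
      have h6 : ((2 * (deriv (fun s => (a s).im) l₀) ^ 2 +
        (2 * (deriv (fun s => (b s).re) l₀) ^ 2 + 2 * (deriv (fun s => (b s).im) l₀) ^ 2) : ℝ) : ℂ)
        = 0 := by
        rw [← neg_eq_zero, ← key]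
        norm_num
      exact_mod_cast h6
    have hdv : deriv (fun s => (a s).im) l₀ = 0 := by
      nlinarith [sq_nonneg (deriv (fun s => (a s).im) l₀), sq_nonneg (deriv (fun s => (b s).re) l₀),
        sq_nonneg (deriv (fun s => (b s).im) l₀)]
    have hdp : deriv (fun s => (b s).re) l₀ = 0 := by
      nlinarith [sq_nonneg (deriv (fun s => (a s).im) l₀), sq_nonneg (deriv (fun s => (b s).re) l₀),
        sq_nonneg (deriv (fun s => (b s).im) l₀)]
    have hdq : deriv (fun s => (b s).im) l₀ = 0 := by
      nlinarith [sq_nonneg (deriv (fun s => (a s).im) l₀), sq_nonneg (deriv (fun s => (b s).re) l₀),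
        sq_nonneg (deriv (fun s => (b s).im) l₀)]
    constructor
    · have hre : (deriv a l₀).re = 0 := by
        have h : deriv (fun s => (a s).re) l₀ = Complex.reCLM (deriv a l₀) :=
          deriv_clm_comp' Complex.reCLM (haA l₀ hl₀).differentiableAt
        rw [h] at hdu; simpa using hdu
      have him : (deriv a l₀).im = 0 := by
        have h : deriv (fun s => (a s).im) l₀ = Complex.imCLM (deriv a l₀) :=
          deriv_clm_comp' Complex.imCLM (haA l₀ hl₀).differentiableAt
        rw [h] at hdv; simpa using hdv
      apply Complex.ext <;> simp [hre, him]
    · have hre : (deriv b l₀).re = 0 := by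
        have h : deriv (fun s => (b s).re) l₀ = Complex.reCLM (deriv b l₀) :=
          deriv_clm_comp' Complex.reCLM (hbA l₀ hl₀).differentiableAt
        rw [h] at hdp; simpa using hdp
      have him : (deriv b l₀).im = 0 := by
        have h : deriv (fun s => (b s).im) l₀ = Complex.imCLM (deriv b l₀) :=
          deriv_clm_comp' Complex.imCLM (hbA l₀ hl₀).differentiableAt
        rw [h] at hdq; simpa using hdq
      apply Complex.ext <;> simp [hre, him]

lemma core (γ : Set ℝ) (hγ : IsOpen γ)
    (M : ℝ → Matrix (Fin 2) (Fin 2) ℂ) (ρ₁ : ℝ → ℂ) (l₀ : ℝ) (hl₀ : l₀ ∈ γ)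
    (hM : ∀ t ∈ γ, ∀ i j, AnalyticAt ℝ (fun s => M s i j) t)
    (hρ₁ : ∀ t ∈ γ, AnalyticAt ℝ ρ₁ t)
    (hU : ∀ t ∈ γ, M t ∈ Matrix.specialUnitaryGroup (Fin 2) ℂ)
    (heig : ∀ t ∈ γ, (M t).charpoly.IsRoot (ρ₁ t))
    (εr : ℝ) (hε : εr = 1 ∨ εr = -1) :
    (M l₀ = (εr : ℂ) • 1 ∧ matDeriv M l₀ = 0) ↔
      (ρ₁ l₀ = (εr : ℂ) ∧ deriv ρ₁ l₀ = 0) := by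
  have hnb : γ ∈ nhds l₀ := hγ.mem_nhds hl₀
  have hadj : ∀ t ∈ γ, star (M t) = (M t).adjugate := by
    intro t ht
    obtain ⟨hu, hdet⟩ := Matrix.mem_specialUnitaryGroup_iff.mp (hU t ht)
    have h1 : star (M t) * M t = 1 := Matrix.mem_unitaryGroup_iff'.mp hu
    have h2 : (M t)⁻¹ = star (M t) := Matrix.inv_eq_left_inv h1
    rw [← h2, Matrix.inv_def, hdet]
    simp
  have hd : ∀ t ∈ γ, M t 1 1 = (starRingEnd ℂ) (M t 0 0) := by
    intro t ht
    have h := congrFun (congrFun (hadj t ht) 0) 0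
    simp [Matrix.star_apply, Matrix.adjugate_fin_two] at h
    exact h.symm
  have hc : ∀ t ∈ γ, M t 1 0 = -(starRingEnd ℂ) (M t 0 1) := by
    intro t ht
    have h := congrFun (congrFun (hadj t ht) 0) 1
    simp [Matrix.star_apply, Matrix.adjugate_fin_two] at h
    simpa using congrArg (starRingEnd ℂ) h
  have hnorm : ∀ t ∈ γ, Complex.normSq (M t 0 0) + Complex.normSq (M t 0 1) = 1 := by
    intro t ht
    obtain ⟨hu, _⟩ := Matrix.mem_specialUnitaryGroup_iff.mp (hU t ht)
    have h1 : M t * star (M t) = 1 := Matrix.mem_unitaryGroup_iff.mp hu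
    have h2 := congrFun (congrFun h1 0) 0
    simp [Matrix.mul_apply, Fin.sum_univ_two, Matrix.star_apply, Matrix.one_apply,
      Complex.star_def, Complex.mul_conj] at h2
    exact_mod_cast h2
  have hchar : ∀ t ∈ γ, ρ₁ t ^ 2 - 2 * ((M t 0 0).re : ℂ) * ρ₁ t + 1 = 0 := by
    intro t ht
    obtain ⟨hu, hdet⟩ := Matrix.mem_specialUnitaryGroup_iff.mp (hU t ht)
    have h := heig t ht
    rw [Polynomial.IsRoot, Matrix.charpoly, Matrix.det_fin_two,
      Matrix.charmatrix_apply_eq, Matrix.charmatrix_apply_eq,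
      Matrix.charmatrix_apply_ne _ _ _ (by decide), Matrix.charmatrix_apply_ne _ _ _ (by decide)]
      at h
    simp only [Polynomial.eval_sub, Polynomial.eval_mul, Polynomial.eval_neg, Polynomial.eval_X,
      Polynomial.eval_C] at h
    rw [Matrix.det_fin_two] at hdet
    rw [hd t ht] at h hdet
    have hadd : M t 0 0 + (starRingEnd ℂ) (M t 0 0) = 2 * ((M t 0 0).re : ℂ) := by
      rw [Complex.add_conj]
      push_cast
      ring
    linear_combination h + ρ₁ t * hadd - hdet
  constructor
  · rintro ⟨hM0, hMd⟩
    have h0 : M l₀ 0 0 = (εr : ℂ) := by rw [hM0]; simp [Matrix.smul_apply, Matrix.one_apply]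
    have hb0 : M l₀ 0 1 = 0 := by rw [hM0]; simp [Matrix.smul_apply, Matrix.one_apply]
    obtain ⟨hρ0, hiff⟩ := scalar_core γ hγ (fun t => M t 0 0) (fun t => M t 0 1) ρ₁ l₀ hl₀
      (fun t ht => hM t ht 0 0) (fun t ht => hM t ht 0 1) hρ₁ hnorm hchar εr hε h0 hb0
    refine ⟨hρ0, hiff.mp ⟨?_, ?_⟩⟩
    · have h := congrFun (congrFun hMd 0) 0
      simpa [matDeriv] using h
    · have h := congrFun (congrFun hMd 0) 1
      simpa [matDeriv] using h
  · rintro ⟨hρ0, hρd⟩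
    obtain ⟨h0, hb0⟩ := pt_rev (M l₀ 0 0) (M l₀ 0 1) (ρ₁ l₀) εr hε (hnorm l₀ hl₀)
      (hchar l₀ hl₀) hρ0
    obtain ⟨-, hiff⟩ := scalar_core γ hγ (fun t => M t 0 0) (fun t => M t 0 1) ρ₁ l₀ hl₀
      (fun t ht => hM t ht 0 0) (fun t ht => hM t ht 0 1) hρ₁ hnorm hchar εr hε h0 hb0
    obtain ⟨hda, hdb⟩ := hiff.mpr hρd
    constructor
    · ext i j
      fin_cases i <;> fin_cases j
      · simpa [Matrix.smul_apply, Matrix.one_apply] using h0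
      · simpa [Matrix.smul_apply, Matrix.one_apply] using hb0
      · show M l₀ 1 0 = ((εr : ℂ) • (1 : Matrix (Fin 2) (Fin 2) ℂ)) 1 0
        rw [hc l₀ hl₀, hb0]
        simp [Matrix.smul_apply, Matrix.one_apply]
      · show M l₀ 1 1 = ((εr : ℂ) • (1 : Matrix (Fin 2) (Fin 2) ℂ)) 1 1
        rw [hd l₀ hl₀, h0]
        simp [Matrix.smul_apply, Matrix.one_apply, Complex.conj_ofReal]
    · ext i j
      fin_cases i <;> fin_cases j
      · simpa [matDeriv] using hda
      · simpa [matDeriv] using hdb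
      · have hev : (fun s => M s 1 0) =ᶠ[nhds l₀]
            (fun s => -(starRingEnd ℂ) (M s 0 1)) := by
          filter_upwards [hnb] with t ht using hc t ht
        simp only [matDeriv, Matrix.of_apply, Matrix.zero_apply]
        show deriv (fun s => M s 1 0) l₀ = 0
        rw [hev.deriv_eq, deriv.fun_neg]
        have h1 : deriv (fun s => (starRingEnd ℂ) (M s 0 1)) l₀
            = Complex.conjCLE.toContinuousLinearMap (deriv (fun s => M s 0 1) l₀) :=
          deriv_clm_comp' Complex.conjCLE.toContinuousLinearMap (hM l₀ hl₀ 0 1).differentiableAt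
        rw [h1, hdb]
        simp
      · have hev : (fun s => M s 1 1) =ᶠ[nhds l₀]
            (fun s => (starRingEnd ℂ) (M s 0 0)) := by
          filter_upwards [hnb] with t ht using hd t ht
        simp only [matDeriv, Matrix.of_apply, Matrix.zero_apply]
        show deriv (fun s => M s 1 1) l₀ = 0
        rw [hev.deriv_eq]
        have h1 : deriv (fun s => (starRingEnd ℂ) (M s 0 0)) l₀
            = Complex.conjCLE.toContinuousLinearMap (deriv (fun s => M s 0 0) l₀) :=
          deriv_clm_comp' Complex.conjCLE.toContinuousLinearMap (hM l₀ hl₀ 0 0).differentiableAt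
        rw [h1, hda]
        simp

/-- For an analytic family of matrices in SU(2) on an open segment
`γ` with analytic eigenvalue branch `ρ₁` and `l₀ ∈ γ`: `M l₀ = ±I` and
`M' l₀ = 0` iff `ρ₁ l₀ = ±1` and `ρ₁' l₀ = 0`. -/
theorem stmt1 (γ : Set ℝ) (hγ : IsOpen γ)
    (M : ℝ → Matrix (Fin 2) (Fin 2) ℂ) (ρ₁ : ℝ → ℂ) (l₀ : ℝ) (hl₀ : l₀ ∈ γ)
    (hM : ∀ t ∈ γ, ∀ i j, AnalyticAt ℝ (fun s => M s i j) t)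
    (hρ₁ : ∀ t ∈ γ, AnalyticAt ℝ ρ₁ t)
    (hU : ∀ t ∈ γ, M t ∈ Matrix.specialUnitaryGroup (Fin 2) ℂ)
    (heig : ∀ t ∈ γ, (M t).charpoly.IsRoot (ρ₁ t)) :
    ((M l₀ = 1 ∨ M l₀ = -1) ∧ matDeriv M l₀ = 0) ↔
      ((ρ₁ l₀ = 1 ∨ ρ₁ l₀ = -1) ∧ deriv ρ₁ l₀ = 0) := by
  have h1 := core γ hγ M ρ₁ l₀ hl₀ hM hρ₁ hU heig 1 (Or.inl rfl)
  have h2 := core γ hγ M ρ₁ l₀ hl₀ hM hρ₁ hU heig (-1) (Or.inr rfl)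
  rw [show (((1:ℝ)) : ℂ) • (1 : Matrix (Fin 2) (Fin 2) ℂ) = 1 by norm_num] at h1
  rw [show (((1:ℝ)) : ℂ) = 1 by norm_num] at h1
  rw [show ((((-1):ℝ)) : ℂ) • (1 : Matrix (Fin 2) (Fin 2) ℂ) = -1 by norm_num] at h2
  rw [show ((((-1):ℝ)) : ℂ) = -1 by norm_num] at h2
  constructor
  · rintro ⟨h | h, hdm⟩
    · obtain ⟨hρ, hdρ⟩ := h1.mp ⟨h, hdm⟩
      exact ⟨Or.inl hρ, hdρ⟩
    · obtain ⟨hρ, hdρ⟩ := h2.mp ⟨h, hdm⟩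
      exact ⟨Or.inr hρ, hdρ⟩
  · rintro ⟨h | h, hdρ⟩
    · obtain ⟨hm, hmd⟩ := h1.mpr ⟨h, hdρ⟩
      exact ⟨Or.inl hm, hmd⟩
    · obtain ⟨hm, hmd⟩ := h2.mpr ⟨h, hdρ⟩
      exact ⟨Or.inr hm, hmd⟩
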